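/- Let α be a topological space, I an admissible ideal on ℕ, η : ℕ → α a sequence and x ∈ α. If η is I*-convergent to x, then η is I-convergent to x. -/

import Mathlib

/-- An ideal on ℕ: a collection of subsets of ℕ containing ∅,
closed under subsets and finite unions. -/
structure IsIdeal (I : Set (Set ℕ)) : Prop where
  empty_mem : (∅ : Set ℕ) ∈ I
  subset_mem : ∀ {A B : Set ℕ}, A ∈ I → B ⊆ A → B ∈ I
  union_mem : ∀ {A B : Set ℕ}, A ∈ I → B ∈ I → A ∪ B ∈ I

/-- A non-trivial ideal: an ideal with I ≠ {∅} and ℕ ∉ I. -/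
def IsNonTrivialIdeal (I : Set (Set ℕ)) : Prop :=
  IsIdeal I ∧ I ≠ {∅} ∧ (Set.univ : Set ℕ) ∉ I

/-- An admissible ideal: a non-trivial ideal containing every singleton. -/
def IsAdmissibleIdeal (I : Set (Set ℕ)) : Prop :=
  IsNonTrivialIdeal I ∧ ∀ n : ℕ, ({n} : Set ℕ) ∈ I

variable {α : Type*} [TopologicalSpace α]

/-- A sequence η is I-convergent to x if for every neighborhood U of x,
the set {n | η n ∉ U} belongs to I. -/
def IConv (I : Set (Set ℕ)) (η : ℕ → α) (x : α) : Prop :=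
  ∀ U ∈ nhds x, {n : ℕ | η n ∉ U} ∈ I

/-- A sequence η is I*-convergent to x if there is P ⊆ ℕ with ℕ \ P ∈ I such that
the subsequence indexed by P converges to x (for every neighborhood U of x,
{n ∈ P | η n ∉ U} is finite). -/
def IStarConv (I : Set (Set ℕ)) (η : ℕ → α) (x : α) : Prop :=
  ∃ P : Set ℕ, Pᶜ ∈ I ∧ ∀ U ∈ nhds x, {n : ℕ | n ∈ P ∧ η n ∉ U}.Finite

/-- x is an I-limit point of η if there exists P ∉ I such that the subsequence
of η indexed by P converges to x. -/
def IsILimitPt (I : Set (Set ℕ)) (η : ℕ → α) (x : α) : Prop :=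
  ∃ P : Set ℕ, P ∉ I ∧ ∀ U ∈ nhds x, {n : ℕ | n ∈ P ∧ η n ∉ U}.Finite

/-- x is an I-cluster point of η if for every neighborhood U of x,
{n | η n ∈ U} ∉ I. -/
def IsIClusterPt (I : Set (Set ℕ)) (η : ℕ → α) (x : α) : Prop :=
  ∀ U ∈ nhds x, {n : ℕ | η n ∈ U} ∉ I

/-- Condition (AP): for every countable family of pairwise disjoint sets in I there
is a countable family K with each symmetric difference Hᵢ Δ Kᵢ finite and ⋃ Kᵢ ∈ I. -/
def APCondition (I : Set (Set ℕ)) : Prop :=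
  ∀ H : ℕ → Set ℕ, (∀ i, H i ∈ I) → Pairwise (Function.onFun Disjoint H) →
    ∃ K : ℕ → Set ℕ, (∀ i, (symmDiff (H i) (K i)).Finite) ∧ (⋃ i, K i) ∈ I

lemma finite_mem_of_admissible {I : Set (Set ℕ)} (hI : IsAdmissibleIdeal I)
    {A : Set ℕ} (hA : A.Finite) : A ∈ I := by
  refine Set.Finite.induction_on A hA hI.1.1.empty_mem ?_
  intro a s _ _ ih
  rw [Set.insert_eq]
  exact hI.1.1.union_mem (hI.2 _) ih

theorem stmt_3 (I : Set (Set ℕ)) (hI : IsAdmissibleIdeal I)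
    (η : ℕ → α) (x : α) (h : IStarConv I η x) :
    IConv I η x := by
  obtain ⟨P, hPc, hP⟩ := h
  intro U hU
  refine hI.1.1.subset_mem (hI.1.1.union_mem hPc (finite_mem_of_admissible hI (hP U hU))) ?_
  intro n hn
  by_cases hnP : n ∈ P
  · exact Or.inr ⟨hnP, hn⟩
  · exact Or.inl hnP
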